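/- Let n ≥ 4, k > k' ≥ 0, and let A be sufficiently large with A < a. Let ξ ∈ C¹([A, a]) be monotone increasing with ξ(A) = k' and ξ(a) = k. Then ∫_A^a √(1 + ξ'(r)²) r^{n−2} dr ≥ (a^{n−1} − A^{n−1})/(n−1) + (1/2)·√A·(k − k'). -/

import Mathlib

open MeasureTheory

lemma ptwise (n : ℕ) (hn : 4 ≤ n) (A r x : ℝ) (hA : 2 ≤ A) (hr : A ≤ r) :
    r ^ (n - 2) + Real.sqrt A * x - 4 * Real.sqrt A * r ^ ((5:ℝ)/2 - n) ≤
      Real.sqrt (1 + x ^ 2) * r ^ (n - 2) := by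
  have hr2 : (2:ℝ) ≤ r := le_trans hA hr
  have hr0 : (0:ℝ) < r := by linarith
  have hr1 : (1:ℝ) ≤ r := by linarith
  set ρ : ℝ := r ^ ((5:ℝ)/2 - n) with hρ
  have hρpos : 0 < ρ := Real.rpow_pos_of_pos hr0 _
  have hρhalf : ρ ≤ 1/2 := by
    have h1 : ρ ≤ r ^ (-1:ℝ) :=
      Real.rpow_le_rpow_of_exponent_le hr1 (by
        have : (4:ℝ) ≤ n := by exact_mod_cast hn
        linarith)
    have h2 : r ^ (-1:ℝ) = r⁻¹ := Real.rpow_neg_one r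
    have : r⁻¹ ≤ 1/2 := by
      rw [inv_le_comm₀ hr0 (by norm_num)]; linarith
    linarith [h1, h2 ▸ h1]
  have hpowpos : (0:ℝ) < r ^ (n - 2) := pow_pos hr0 _
  have hsq1 : (1:ℝ) ≤ Real.sqrt (1 + x ^ 2) := by
    have h := Real.sqrt_le_sqrt (show (1:ℝ) ≤ 1 + x ^ 2 by nlinarith)
    rwa [Real.sqrt_one] at h
  have hsA : (0:ℝ) ≤ Real.sqrt A := Real.sqrt_nonneg A
  by_cases hx : x ≤ 4 * ρ
  · nlinarith [mul_le_mul_of_nonneg_left hx hsA]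
  · push_neg at hx
    have hx0 : 0 < x := lt_trans (by positivity) hx
    -- s := sqrt(1+x^2), s*(x+2) ≥ x^2 + (x+2)
    have hs : x ^ 2 + (x + 2) ≤ Real.sqrt (1 + x ^ 2) * (x + 2) := by
      have h1 : 1 + x ^ 2 / (x + 2) ≤ Real.sqrt (1 + x ^ 2) := by
        rw [show Real.sqrt (1 + x^2) = Real.sqrt (1+x^2) from rfl]
        have hnn : (0:ℝ) ≤ 1 + x ^ 2 / (x + 2) := by positivity
        rw [← Real.sqrt_sq hnn]
        apply Real.sqrt_le_sqrt
        have hx2 : (0:ℝ) < x + 2 := by linarith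
        have e : 1 + x ^ 2 / (x + 2) = (x ^ 2 + x + 2) / (x + 2) := by
          field_simp; ring
        rw [e, div_pow, div_le_iff₀ (by positivity)]
        nlinarith [hx0.le, sq_nonneg x]
      have hx2 : (0:ℝ) < x + 2 := by linarith
      have := mul_le_mul_of_nonneg_right h1 hx2.le
      calc x ^ 2 + (x + 2) = (1 + x ^ 2 / (x + 2)) * (x + 2) := by field_simp; ring
        _ ≤ _ := this
    -- ρ * (x+2) ≤ x
    have hρx : ρ * (x + 2) ≤ x := by nlinarith
    -- ρ * r^(n-2) = sqrt r
    have hpow : ρ * r ^ (n - 2) = Real.sqrt r := by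
      rw [hρ, ← Real.rpow_natCast r (n - 2), ← Real.rpow_add hr0,
        Real.sqrt_eq_rpow]
      congr 1
      have : ((n - 2 : ℕ) : ℝ) = (n : ℝ) - 2 := by
        have : (2:ℕ) ≤ n := by omega
        push_cast [Nat.cast_sub this]
        ring
      rw [this]; ring
    have hsr : Real.sqrt A ≤ Real.sqrt r := Real.sqrt_le_sqrt hr
    -- s - 1 ≥ ρ * x  (from hs and hρx): (s-1)(x+2) ≥ x^2 ≥ x ρ (x+2)
    have key : Real.sqrt A * x ≤ (Real.sqrt (1 + x ^ 2) - 1) * r ^ (n - 2) := by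
      have h1 : ρ * x ≤ Real.sqrt (1 + x ^ 2) - 1 := by nlinarith
      calc Real.sqrt A * x ≤ Real.sqrt r * x :=
            mul_le_mul_of_nonneg_right hsr hx0.le
        _ = (ρ * x) * r ^ (n - 2) := by rw [← hpow]; ring
        _ ≤ (Real.sqrt (1 + x ^ 2) - 1) * r ^ (n - 2) :=
            mul_le_mul_of_nonneg_right h1 hpowpos.le
    nlinarith

/-- Let n ≥ 4, k > k' ≥ 0, and let A be sufficiently large with A < a.
Let ξ ∈ C¹([A, a]) be monotone increasing with ξ(A) = k' and ξ(a) = k. Then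
∫_A^a √(1 + ξ'(r)²) r^{n−2} dr ≥ (a^{n−1} − A^{n−1})/(n−1) + (1/2)·√A·(k − k'). -/
theorem stmt_10 (n : ℕ) (hn : 4 ≤ n) (k k' : ℝ) (hk' : 0 ≤ k') (hkk : k' < k) :
    ∃ A₀ : ℝ, ∀ A a : ℝ, A₀ ≤ A → A < a → ∀ ξ : ℝ → ℝ,
      ContDiffOn ℝ 1 ξ (Set.Icc A a) →
      MonotoneOn ξ (Set.Icc A a) →
      ξ A = k' → ξ a = k →
      (a ^ (n - 1) - A ^ (n - 1)) / ((n : ℝ) - 1) + (1 / 2) * Real.sqrt A * (k - k') ≤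
        ∫ r in A..a, Real.sqrt (1 + (deriv ξ r) ^ 2) * r ^ (n - 2) := by
  refine ⟨max 2 ((16 / (k - k')) ^ 2), fun A a hA0 hAa ξ hξ hmono hξA hξa => ?_⟩
  have hA2 : (2:ℝ) ≤ A := le_trans (le_max_left _ _) hA0
  have hA1 : (1:ℝ) ≤ A := by linarith
  have hApos : (0:ℝ) < A := by linarith
  have haA : A ≤ a := hAa.le
  have hkk2 : 0 < k - k' := by linarith
  -- sqrt A ≥ 16/(k-k')
  have hsqA : 16 / (k - k') ≤ Real.sqrt A := by
    have h1 : ((16 / (k - k')) ^ 2 : ℝ) ≤ A := le_trans (le_max_right _ _) hA0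
    have := Real.sqrt_le_sqrt h1
    rwa [Real.sqrt_sq (by positivity)] at this
  set g : ℝ → ℝ := derivWithin ξ (Set.Icc A a) with hg
  have hUD : UniqueDiffOn ℝ (Set.Icc A a) := uniqueDiffOn_Icc hAa
  have hgcont : ContinuousOn g (Set.Icc A a) :=
    hξ.continuousOn_derivWithin hUD le_rfl
  have heq : ∀ x ∈ Set.Ioo A a, deriv ξ x = g x := fun x hx =>
    (derivWithin_of_mem_nhds (Icc_mem_nhds hx.1 hx.2)).symm
  have hres : volume.restrict (Set.Ioc A a) = volume.restrict (Set.Ioo A a) :=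
    (Measure.restrict_congr_set Ioo_ae_eq_Ioc).symm
  have hae : deriv ξ =ᵐ[volume.restrict (Set.Ioc A a)] g := by
    rw [hres]
    exact (ae_restrict_mem measurableSet_Ioo).mono heq
  -- integrability of deriv ξ
  have hint_d : IntervalIntegrable (deriv ξ) volume A a := by
    rw [intervalIntegrable_iff_integrableOn_Ioc_of_le haA]
    exact ((hgcont.integrableOn_Icc).mono_set Set.Ioc_subset_Icc_self).congr hae.symm
  -- integrability of the main integrand
  have hint_f : IntervalIntegrable
      (fun r => Real.sqrt (1 + (deriv ξ r) ^ 2) * r ^ (n - 2)) volume A a := by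
    rw [intervalIntegrable_iff_integrableOn_Ioc_of_le haA]
    have hFc : ContinuousOn (fun r => Real.sqrt (1 + (g r) ^ 2) * r ^ (n - 2))
        (Set.Icc A a) := by
      apply ContinuousOn.mul _ (continuousOn_pow _)
      exact (continuousOn_const.add (hgcont.pow 2)).sqrt
    refine ((hFc.integrableOn_Icc).mono_set Set.Ioc_subset_Icc_self).congr ?_
    exact hae.symm.mono fun x hx => by simp only [hx]
  have hint_pow : IntervalIntegrable (fun r : ℝ => r ^ (n - 2)) volume A a :=
    (continuous_pow _).intervalIntegrable _ _
  have hint_rpow : IntervalIntegrable (fun r : ℝ => r ^ ((5:ℝ)/2 - n)) volume A a := by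
    apply intervalIntegral.intervalIntegrable_rpow (Or.inr ?_)
    rw [Set.uIcc_of_le haA]
    intro h
    exact absurd h.1 (by linarith)
  -- FTC
  have hftc : (∫ r in A..a, deriv ξ r) = k - k' := by
    have h := intervalIntegral.integral_eq_sub_of_hasDeriv_right_of_le haA
      hξ.continuousOn (fun x hx => ((hξ.differentiableOn one_ne_zero).differentiableAt
        (Icc_mem_nhds hx.1 hx.2)).hasDerivAt.hasDerivWithinAt) hint_d
    rw [h, hξA, hξa]
  -- power integral
  have h1 : (∫ r in A..a, r ^ (n - 2)) = (a ^ (n - 1) - A ^ (n - 1)) / ((n:ℝ) - 1) := by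
    rw [integral_pow]
    have e : n - 2 + 1 = n - 1 := by omega
    rw [e]
    have e2 : ((n - 2 : ℕ) : ℝ) + 1 = (n : ℝ) - 1 := by
      push_cast [Nat.cast_sub (by omega : 2 ≤ n)]; ring
    rw [e2]
  -- rpow integral
  have h2 : (∫ r in A..a, r ^ ((5:ℝ)/2 - n))
      = (a ^ ((7:ℝ)/2 - n) - A ^ ((7:ℝ)/2 - n)) / ((7:ℝ)/2 - n) := by
    rw [integral_rpow (Or.inr ⟨by
        have : (4:ℝ) ≤ n := by exact_mod_cast hn
        intro h; rw [sub_eq_iff_eq_add] at h; norm_num at h; linarith, by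
        rw [Set.uIcc_of_le haA]; intro h; exact absurd h.1 (by linarith)⟩)]
    rw [show (5:ℝ)/2 - n + 1 = 7/2 - n by ring]
  -- the lower-bound integrand
  have hmono' : ∀ r ∈ Set.Icc A a,
      (fun r => r ^ (n - 2) + Real.sqrt A * deriv ξ r
        - 4 * Real.sqrt A * r ^ ((5:ℝ)/2 - n)) r ≤
      (fun r => Real.sqrt (1 + (deriv ξ r) ^ 2) * r ^ (n - 2)) r :=
    fun r hr => ptwise n hn A r (deriv ξ r) hA2 hr.1
  have hint_g : IntervalIntegrable (fun r => r ^ (n - 2) + Real.sqrt A * deriv ξ r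
      - 4 * Real.sqrt A * r ^ ((5:ℝ)/2 - n)) volume A a :=
    (hint_pow.add (hint_d.const_mul _)).sub (hint_rpow.const_mul _)
  have hle := intervalIntegral.integral_mono_on haA hint_g hint_f hmono'
  have hsplit : (∫ r in A..a, (r ^ (n - 2) + Real.sqrt A * deriv ξ r
      - 4 * Real.sqrt A * r ^ ((5:ℝ)/2 - n)))
      = (∫ r in A..a, r ^ (n - 2)) + Real.sqrt A * (∫ r in A..a, deriv ξ r)
        - 4 * Real.sqrt A * (∫ r in A..a, r ^ ((5:ℝ)/2 - n)) := by
    rw [intervalIntegral.integral_sub (hint_pow.add (hint_d.const_mul _))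
      (hint_rpow.const_mul _), intervalIntegral.integral_add hint_pow
      (hint_d.const_mul _), intervalIntegral.integral_const_mul,
      intervalIntegral.integral_const_mul]
  rw [hsplit, hftc, h1, h2] at hle
  -- final arithmetic
  have herr : 4 * Real.sqrt A *
      ((a ^ ((7:ℝ)/2 - n) - A ^ ((7:ℝ)/2 - n)) / ((7:ℝ)/2 - n))
      ≤ (1/2) * Real.sqrt A * (k - k') := by
    have hn4 : (4:ℝ) ≤ n := by exact_mod_cast hn
    have hq : ((7:ℝ)/2 - n) ≤ -(1/2) := by linarith
    have hqneg : ((7:ℝ)/2 - n) < 0 := by linarith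
    have hAq : A ^ ((7:ℝ)/2 - n) ≤ A ^ (-(1/2):ℝ) :=
      Real.rpow_le_rpow_of_exponent_le hA1 hq
    have haq : 0 < a ^ ((7:ℝ)/2 - n) := Real.rpow_pos_of_pos (by linarith) _
    have hE : (a ^ ((7:ℝ)/2 - n) - A ^ ((7:ℝ)/2 - n)) / ((7:ℝ)/2 - n)
        ≤ 2 * A ^ (-(1/2):ℝ) := by
      rw [div_le_iff_of_neg hqneg]
      nlinarith [Real.rpow_pos_of_pos hApos (-(1/2):ℝ)]
    have hsArpow : Real.sqrt A * A ^ (-(1/2):ℝ) = 1 := by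
      rw [Real.sqrt_eq_rpow, ← Real.rpow_add hApos]
      norm_num
    have h16 : 16 ≤ Real.sqrt A * (k - k') := by
      have := mul_le_mul_of_nonneg_right hsqA hkk2.le
      rwa [div_mul_cancel₀ _ (ne_of_gt hkk2)] at this
    have hsA0 : 0 ≤ Real.sqrt A := Real.sqrt_nonneg A
    calc 4 * Real.sqrt A * ((a ^ ((7:ℝ)/2 - n) - A ^ ((7:ℝ)/2 - n)) / ((7:ℝ)/2 - n))
        ≤ 4 * Real.sqrt A * (2 * A ^ (-(1/2):ℝ)) := by
          apply mul_le_mul_of_nonneg_left hE (by positivity)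
      _ = 8 * (Real.sqrt A * A ^ (-(1/2):ℝ)) := by ring
      _ = 8 := by rw [hsArpow]; ring
      _ ≤ (1/2) * Real.sqrt A * (k - k') := by nlinarith
  linarith
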